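/- arXiv:2204.00595 — 5 statements merged into one kernel-verified Lean document; each statement's English description precedes it below -/
import Mathlib

section
/- Let n = m² for an integer m ≥ 2, let 𝔽 be a field, and let M be an n×n matrix over 𝔽. Then M is a Monarch matrix (i.e., M = P L Pᵀ R for some L, R ∈ BD(m,n), where P = P_{(m,n)}) if and only if for every pair (j,k) with 0 ≤ j,k ≤ m−1, the m×m matrix M_{jk} defined by M_{jk}[ℓ,i] = M[ℓ·m + j, k·m + i] (0 ≤ ℓ,i ≤ m−1) has rank at most 1. -/
open Matrix

/-- `BD b n R`: `R` is block-diagonal with `n/b` diagonal blocks of size `b × b`. -/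
def BD {𝔽 : Type*} [Field 𝔽] (b n : ℕ) (R : Matrix (Fin n) (Fin n) 𝔽) : Prop :=
  ∀ i j : Fin n, i.val / b ≠ j.val / b → R i j = 0

/-- The permutation matrix `P_{(b,n)}`, with `P[σ_{(b,n)}(j), j] = 1` where
`σ_{(b,n)}(j) = (j mod b) * (n/b) + ⌊j/b⌋`. -/
def permMat (𝔽 : Type*) [Field 𝔽] (b n : ℕ) : Matrix (Fin n) (Fin n) 𝔽 :=
  Matrix.of fun i j => if i.val = j.val % b * (n / b) + j.val / b then 1 else 0

lemma idx_lt {m : ℕ} (a c : Fin m) : a.val * m + c.val < m * m := by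
  have h1 : a.val + 1 ≤ m := a.isLt
  calc a.val * m + c.val < a.val * m + m := by omega
    _ = (a.val + 1) * m := by ring
    _ ≤ m * m := Nat.mul_le_mul h1 le_rfl

section Aux

variable {𝔽 : Type*} [Field 𝔽] {m : ℕ}

lemma aux_mdiv {a b : ℕ} (hb : b < m) : (a * m + b) / m = a := by
  rw [mul_comm, Nat.mul_add_div (by omega)]
  simp [Nat.div_eq_of_lt hb]

lemma aux_mmod {a b : ℕ} (hb : b < m) : (a * m + b) % m = b := by
  rw [mul_comm, Nat.mul_add_mod, Nat.mod_eq_of_lt hb]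

lemma aux_mpos (x : Fin (m * m)) : 0 < m := by
  rcases Nat.eq_zero_or_pos m with h | h
  · exact absurd x.isLt (by subst h; simp)
  · exact h

lemma aux_div_lt {x : ℕ} (hx : x < m * m) : x / m < m :=
  Nat.div_lt_of_lt_mul (by rwa [mul_comm] at hx)

/-- The involution `σ` on `Fin (m*m)`. -/
def sigmaF (m : ℕ) (x : Fin (m * m)) : Fin (m * m) :=
  ⟨x.val % m * m + x.val / m,
    idx_lt ⟨x.val % m, Nat.mod_lt _ (aux_mpos x)⟩ ⟨x.val / m, aux_div_lt x.isLt⟩⟩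

lemma sigmaF_sigmaF (x : Fin (m * m)) : sigmaF m (sigmaF m x) = x := by
  apply Fin.ext
  simp only [sigmaF, aux_mmod (aux_div_lt x.isLt), aux_mdiv (aux_div_lt x.isLt)]
  rw [mul_comm]
  exact Nat.div_add_mod x.val m

lemma sigmaF_eq_iff {x y : Fin (m * m)} : x = sigmaF m y ↔ y = sigmaF m x := by
  constructor <;> intro h <;> subst h <;> rw [sigmaF_sigmaF]

lemma permMat_apply (hm : 0 < m) (a s : Fin (m * m)) :
    permMat 𝔽 m (m * m) a s = if s = sigmaF m a then 1 else 0 := by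
  have hmm : m * m / m = m := Nat.mul_div_cancel_left m hm
  simp only [permMat, of_apply, hmm]
  have : (a.val = s.val % m * m + s.val / m) ↔ (s = sigmaF m a) := by
    rw [show (s.val % m * m + s.val / m) = (sigmaF m s).val from rfl, ← Fin.ext_iff]
    exact sigmaF_eq_iff
  simp [this]

lemma permMat_mul_apply (hm : 0 < m) (L : Matrix (Fin (m * m)) (Fin (m * m)) 𝔽)
    (a r : Fin (m * m)) : (permMat 𝔽 m (m * m) * L) a r = L (sigmaF m a) r := by
  rw [mul_apply]
  simp [permMat_apply hm, ite_mul]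

lemma mul_permMat_transpose_apply (hm : 0 < m) (X : Matrix (Fin (m * m)) (Fin (m * m)) 𝔽)
    (a t : Fin (m * m)) : (X * (permMat 𝔽 m (m * m))ᵀ) a t = X a (sigmaF m t) := by
  rw [mul_apply]
  simp [transpose_apply, permMat_apply hm, mul_ite]

/-- entries of `P L Pᵀ R` at block coordinates, assuming `L, R` block diagonal. -/
lemma prod_entry (hm : 0 < m) (L R : Matrix (Fin (m * m)) (Fin (m * m)) 𝔽)
    (hL : BD m (m * m) L) (hR : BD m (m * m) R) (j k ℓ i : Fin m) :
    (permMat 𝔽 m (m * m) * L * (permMat 𝔽 m (m * m))ᵀ * R)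
      ⟨ℓ.val * m + j.val, idx_lt ℓ j⟩ ⟨k.val * m + i.val, idx_lt k i⟩ =
    L ⟨j.val * m + ℓ.val, idx_lt j ℓ⟩ ⟨j.val * m + k.val, idx_lt j k⟩ *
      R ⟨k.val * m + j.val, idx_lt k j⟩ ⟨k.val * m + i.val, idx_lt k i⟩ := by
  set a : Fin (m * m) := ⟨ℓ.val * m + j.val, idx_lt ℓ j⟩
  set b : Fin (m * m) := ⟨k.val * m + i.val, idx_lt k i⟩
  have hσa : sigmaF m a = ⟨j.val * m + ℓ.val, idx_lt j ℓ⟩ := by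
    apply Fin.ext
    simp [sigmaF, a, aux_mmod j.isLt, aux_mdiv j.isLt]
  rw [mul_apply]
  rw [Finset.sum_eq_single (⟨k.val * m + j.val, idx_lt k j⟩ : Fin (m * m))]
  · rw [mul_permMat_transpose_apply hm, permMat_mul_apply hm, hσa]
    have hσt : sigmaF m (⟨k.val * m + j.val, idx_lt k j⟩ : Fin (m * m)) =
        ⟨j.val * m + k.val, idx_lt j k⟩ := by
      apply Fin.ext
      simp [sigmaF, aux_mmod j.isLt, aux_mdiv j.isLt]
    rw [hσt]
  · intro t _ ht
    rw [mul_permMat_transpose_apply hm, permMat_mul_apply hm, hσa]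
    by_cases h1 : t.val % m = j.val
    · have h2 : t.val / m ≠ k.val := by
        intro h2
        apply ht
        apply Fin.ext
        show t.val = k.val * m + j.val
        conv_rhs => rw [← h1, ← h2]
        exact (Nat.div_add_mod' t.val m).symm
      rw [hR t b (by simpa [b, aux_mdiv i.isLt] using h2), mul_zero]
    · have : L ⟨j.val * m + ℓ.val, idx_lt j ℓ⟩ (sigmaF m t) = 0 := by
        apply hL
        simp only [sigmaF, aux_mdiv ℓ.isLt]
        rw [aux_mdiv (aux_div_lt t.isLt)]
        exact fun h => h1 h.symm
      rw [this, zero_mul]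
  · simp

/-- rank ≤ 1 iff the matrix is an outer product. -/
lemma rank_le_one_iff_outer (A : Matrix (Fin m) (Fin m) 𝔽) :
    A.rank ≤ 1 ↔ ∃ u v : Fin m → 𝔽, ∀ ℓ i, A ℓ i = u ℓ * v i := by
  constructor
  · intro h
    rw [Matrix.rank] at h
    obtain ⟨u₀, hu⟩ := finrank_le_one_iff.mp h
    choose v hv using fun i : Fin m =>
      hu ⟨A.mulVec (Pi.single i 1), LinearMap.mem_range_self A.mulVecLin _⟩
    refine ⟨fun ℓ => (u₀ : Fin m → 𝔽) ℓ, v, fun ℓ i => ?_⟩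
    have := congrFun (congrArg Subtype.val (hv i)) ℓ
    simp only [Submodule.coe_smul, Pi.smul_apply, smul_eq_mul] at this
    have h2 : (A *ᵥ Pi.single i 1) ℓ = A ℓ i := by
      simp [mulVec, dotProduct, Pi.single_apply]
    rw [h2] at this
    rw [← this]
    ring
  · rintro ⟨u, v, h⟩
    rw [Matrix.rank]
    have hle : LinearMap.range A.mulVecLin ≤ Submodule.span 𝔽 {u} := by
      rintro w ⟨x, rfl⟩
      rw [Submodule.mem_span_singleton]
      refine ⟨∑ i, v i * x i, ?_⟩
      funext ℓ
      simp only [Pi.smul_apply, smul_eq_mul, mulVecLin_apply, mulVec, dotProduct, h,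
        Finset.sum_mul]
      exact Finset.sum_congr rfl fun i _ => by ring
    calc Module.finrank 𝔽 (LinearMap.range A.mulVecLin)
        ≤ Module.finrank 𝔽 (Submodule.span 𝔽 {u}) := Submodule.finrank_mono hle
      _ ≤ 1 := by
          by_cases hu : u = 0
          · rw [hu, Submodule.span_zero_singleton]
            simp
          · rw [finrank_span_singleton hu]

end Aux

/-- `M` is a Monarch matrix (i.e. `M = P L Pᵀ R` with `L, R ∈ BD(m, m²)`
and `P = P_{(m,m²)}`) iff every `m × m` block `M_{jk}[ℓ,i] = M[ℓm+j, km+i]` has rank ≤ 1. -/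
theorem monarch_iff_blocks_rank_le_one {𝔽 : Type*} [Field 𝔽] (m : ℕ) (hm : 2 ≤ m)
    (M : Matrix (Fin (m * m)) (Fin (m * m)) 𝔽) :
    (∃ L R : Matrix (Fin (m * m)) (Fin (m * m)) 𝔽,
        BD m (m * m) L ∧ BD m (m * m) R ∧
        M = permMat 𝔽 m (m * m) * L * (permMat 𝔽 m (m * m))ᵀ * R) ↔
    (∀ j k : Fin m,
      (Matrix.of fun ℓ i : Fin m =>
        M ⟨ℓ.val * m + j.val, idx_lt ℓ j⟩ ⟨k.val * m + i.val, idx_lt k i⟩).rank ≤ 1) := by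
  have hm0 : 0 < m := by omega
  constructor
  · rintro ⟨L, R, hL, hR, rfl⟩ j k
    rw [rank_le_one_iff_outer]
    refine ⟨fun ℓ => L ⟨j.val * m + ℓ.val, idx_lt j ℓ⟩ ⟨j.val * m + k.val, idx_lt j k⟩,
      fun i => R ⟨k.val * m + j.val, idx_lt k j⟩ ⟨k.val * m + i.val, idx_lt k i⟩,
      fun ℓ i => ?_⟩
    simp only [of_apply]
    exact prod_entry hm0 L R hL hR j k ℓ i
  · intro h
    choose u v huv using fun j k => (rank_le_one_iff_outer _).mp (h j k)
    classical
    refine ⟨Matrix.of fun x y =>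
        if x.val / m = y.val / m then
          u ⟨x.val / m, aux_div_lt x.isLt⟩ ⟨y.val % m, Nat.mod_lt _ hm0⟩
            ⟨x.val % m, Nat.mod_lt _ hm0⟩
        else 0,
      Matrix.of fun x y =>
        if x.val / m = y.val / m then
          v ⟨x.val % m, Nat.mod_lt _ hm0⟩ ⟨x.val / m, aux_div_lt x.isLt⟩
            ⟨y.val % m, Nat.mod_lt _ hm0⟩
        else 0, ?_, ?_, ?_⟩
    · intro x y hxy; simp [of_apply, hxy]
    · intro x y hxy; simp [of_apply, hxy]
    · funext a b
      set j : Fin m := ⟨a.val % m, Nat.mod_lt _ hm0⟩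
      set ℓ : Fin m := ⟨a.val / m, aux_div_lt a.isLt⟩
      set k : Fin m := ⟨b.val / m, aux_div_lt b.isLt⟩
      set i : Fin m := ⟨b.val % m, Nat.mod_lt _ hm0⟩
      have ha : a = ⟨ℓ.val * m + j.val, idx_lt ℓ j⟩ := by
        apply Fin.ext
        show a.val = a.val / m * m + a.val % m
        exact (Nat.div_add_mod' a.val m).symm
      have hb : b = ⟨k.val * m + i.val, idx_lt k i⟩ := by
        apply Fin.ext
        show b.val = b.val / m * m + b.val % m
        exact (Nat.div_add_mod' b.val m).symm
      rw [ha, hb, prod_entry hm0 _ _ ?_ ?_ j k ℓ i]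
      · have := huv j k ℓ i
        simp only [of_apply] at this ⊢
        rw [this]
        congr 1
        · simp [of_apply, aux_mdiv ℓ.isLt, aux_mmod ℓ.isLt, aux_mmod k.isLt, aux_mdiv k.isLt]
        · simp [of_apply, aux_mdiv j.isLt, aux_mmod j.isLt, aux_mmod i.isLt, aux_mdiv i.isLt]
      · intro x y hxy; simp [of_apply, hxy]
      · intro x y hxy; simp [of_apply, hxy]
end

section
/- Let 1 < b < n be integers with b dividing n, and let L ∈ DB(b,n) over a field 𝔽. Then P_{(b,n)} · L · P_{(b,n)}ᵀ ∈ BD(n/b, n), i.e., conjugating L by the permutation matrix P_{(b,n)} yields a block-diagonal matrix with b diagonal blocks of size (n/b)×(n/b). -/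
open Matrix

/-- `DB b n L`: `L[i,j] = 0` whenever `i ≢ j (mod b)`. -/
def DB {𝔽 : Type*} [Field 𝔽] (b n : ℕ) (L : Matrix (Fin n) (Fin n) 𝔽) : Prop :=
  ∀ i j : Fin n, i.val % b ≠ j.val % b → L i j = 0

/-- if `L ∈ DB(b,n)` then `P_{(b,n)} L P_{(b,n)}ᵀ ∈ BD(n/b, n)`. -/
theorem db_conj_perm_mem_bd {𝔽 : Type*} [Field 𝔽] (b n : ℕ)
    (hb : 1 < b) (hbn : b < n) (hdvd : b ∣ n)
    (L : Matrix (Fin n) (Fin n) 𝔽) (hL : DB b n L) :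
    BD (n / b) n (permMat 𝔽 b n * L * (permMat 𝔽 b n)ᵀ) := by
  intro i j hij
  set m := n / b with hm
  have hm0 : 0 < m := Nat.div_pos hbn.le (Nat.lt_of_lt_of_le Nat.one_pos hb.le)
  have key : ∀ (x k : Fin n), x.val = k.val % b * m + k.val / b → x.val / m = k.val % b := by
    intro x k hx
    have hlt : k.val / b < m := Nat.div_lt_div_of_lt_of_dvd hdvd k.isLt
    rw [hx, Nat.add_comm, Nat.add_mul_div_right _ _ hm0, Nat.div_eq_of_lt hlt, Nat.zero_add]
  simp only [Matrix.mul_apply, transpose_apply, permMat, of_apply]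
  apply Finset.sum_eq_zero
  intro x _
  rcases eq_or_ne (j.val) (x.val % b * m + x.val / b) with hj | hj
  · have hjx := key j x hj
    rw [Finset.sum_eq_zero]
    · ring
    intro k _
    rcases eq_or_ne (i.val) (k.val % b * m + k.val / b) with hi | hi
    · have hik := key i k hi
      rw [hL k x (by rw [← hik, ← hjx]; exact hij)]
      ring
    · simp [← hm, hi]
  · simp [← hm, hj]
end

section
/- Let n ≥ 4 be a power of 2 and let b ∈ (1, n) be an integer dividing n. Then every butterfly matrix of size n×n lies in the Monarch class M(b,n); that is, B^{(n)} ⊆ M(b,n). -/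
open Matrix

/-- Butterfly class `B^{(n)}` for `n = 2^k`: products `B_n · B_{n/2} · ⋯ · B_2` where
`B_{2^i}` is a butterfly factor matrix of size `2^i`, i.e. lies in
`BD(2^i, n) ∩ DB(2^{i-1}, n)`. -/
def Butterfly {𝔽 : Type*} [Field 𝔽] (n k : ℕ) (M : Matrix (Fin n) (Fin n) 𝔽) : Prop :=
  ∃ B : ℕ → Matrix (Fin n) (Fin n) 𝔽,
    (∀ i, 1 ≤ i → i ≤ k → BD (2 ^ i) n (B i) ∧ DB (2 ^ (i - 1)) n (B i)) ∧
    M = (((List.range k).map fun t => B (k - t)).prod)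

lemma DB_one {𝔽 : Type*} [Field 𝔽] (b n : ℕ) : DB b n (1 : Matrix (Fin n) (Fin n) 𝔽) := by
  intro i j hij
  exact Matrix.one_apply_ne (fun h => hij (by rw [h]))

lemma BD_one {𝔽 : Type*} [Field 𝔽] (b n : ℕ) : BD b n (1 : Matrix (Fin n) (Fin n) 𝔽) := by
  intro i j hij
  exact Matrix.one_apply_ne (fun h => hij (by rw [h]))

lemma DB_mul {𝔽 : Type*} [Field 𝔽] {b n : ℕ} {L L' : Matrix (Fin n) (Fin n) 𝔽}
    (h : DB b n L) (h' : DB b n L') : DB b n (L * L') := by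
  intro i j hij
  rw [Matrix.mul_apply]
  apply Finset.sum_eq_zero
  intro x _
  by_cases hx : i.val % b = x.val % b
  · rw [h' x j (fun hxj => hij (hx.trans hxj)), mul_zero]
  · rw [h i x hx, zero_mul]

lemma BD_mul {𝔽 : Type*} [Field 𝔽] {b n : ℕ} {L L' : Matrix (Fin n) (Fin n) 𝔽}
    (h : BD b n L) (h' : BD b n L') : BD b n (L * L') := by
  intro i j hij
  rw [Matrix.mul_apply]
  apply Finset.sum_eq_zero
  intro x _
  by_cases hx : i.val / b = x.val / b
  · rw [h' x j (fun hxj => hij (hx.trans hxj)), mul_zero]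
  · rw [h i x hx, zero_mul]

lemma DB_prod {𝔽 : Type*} [Field 𝔽] {b n : ℕ} (l : List (Matrix (Fin n) (Fin n) 𝔽))
    (h : ∀ x ∈ l, DB b n x) : DB b n l.prod := by
  induction l with
  | nil => simpa using DB_one b n
  | cons a l ih =>
      rw [List.prod_cons]
      exact DB_mul (h a List.mem_cons_self) (ih fun x hx => h x (List.mem_cons_of_mem a hx))

lemma BD_prod {𝔽 : Type*} [Field 𝔽] {b n : ℕ} (l : List (Matrix (Fin n) (Fin n) 𝔽))
    (h : ∀ x ∈ l, BD b n x) : BD b n l.prod := by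
  induction l with
  | nil => simpa using BD_one b n
  | cons a l ih =>
      rw [List.prod_cons]
      exact BD_mul (h a List.mem_cons_self) (ih fun x hx => h x (List.mem_cons_of_mem a hx))

lemma DB_mono {𝔽 : Type*} [Field 𝔽] {b c n : ℕ} (hbc : b ∣ c)
    {L : Matrix (Fin n) (Fin n) 𝔽} (h : DB c n L) : DB b n L := by
  intro i j hij
  apply h
  intro hc
  exact hij (by rw [← Nat.mod_mod_of_dvd i.val hbc, ← Nat.mod_mod_of_dvd j.val hbc, hc])

lemma BD_mono {𝔽 : Type*} [Field 𝔽] {b c n : ℕ} (hcb : c ∣ b)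
    {R : Matrix (Fin n) (Fin n) 𝔽} (h : BD c n R) : BD b n R := by
  intro i j hij
  apply h
  intro hc
  apply hij
  have hb : b = c * (b / c) := (Nat.mul_div_cancel' hcb).symm
  rw [hb, ← Nat.div_div_eq_div_mul, ← Nat.div_div_eq_div_mul, hc]

/-- for `n = 2^k ≥ 4` and any `b ∈ (1,n)` dividing `n`,
every butterfly matrix lies in the Monarch class `M(b,n)`. -/
theorem butterfly_subset_monarch {𝔽 : Type*} [Field 𝔽] (k n : ℕ)
    (hk : 2 ≤ k) (hn : n = 2 ^ k)
    (b : ℕ) (hb : 1 < b) (hbn : b < n) (hdvd : b ∣ n)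
    (M : Matrix (Fin n) (Fin n) 𝔽) (hM : Butterfly n k M) :
    ∃ L R : Matrix (Fin n) (Fin n) 𝔽, DB b n L ∧ BD b n R ∧ M = L * R := by
  obtain ⟨j, hjk, rfl⟩ := (Nat.dvd_prime_pow Nat.prime_two).mp (hn ▸ hdvd)
  have hj1 : 1 ≤ j := by
    by_contra h
    interval_cases j <;> simp_all
  have hjk' : j < k := by
    by_contra h
    push_neg at h
    exact absurd (hn ▸ hbn) (not_lt.mpr (Nat.pow_le_pow_right (by norm_num) h))
  obtain ⟨B, hB, hMeq⟩ := hM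
  have hsplit : List.range k = List.range (k - j) ++ (List.range j).map (fun t => (k - j) + t) := by
    rw [← List.range_add]
    congr 1
    omega
  refine ⟨((List.range (k - j)).map fun t => B (k - t)).prod,
          ((List.range j).map fun t => B (k - ((k - j) + t))).prod, ?_, ?_, ?_⟩
  · apply DB_prod
    intro x hx
    simp only [List.mem_map, List.mem_range] at hx
    obtain ⟨t, ht, rfl⟩ := hx
    have h1 : 1 ≤ k - t := by omega
    have h2 : k - t ≤ k := by omega
    exact DB_mono (pow_dvd_pow 2 (by omega : j ≤ k - t - 1)) (hB (k - t) h1 h2).2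
  · apply BD_prod
    intro x hx
    simp only [List.mem_map, List.mem_range] at hx
    obtain ⟨t, ht, rfl⟩ := hx
    have h1 : 1 ≤ k - ((k - j) + t) := by omega
    have h2 : k - ((k - j) + t) ≤ k := by omega
    exact BD_mono (pow_dvd_pow 2 (by omega : k - ((k - j) + t) ≤ j)) (hB _ h1 h2).1
  · rw [hMeq, hsplit, List.map_append, List.prod_append, List.map_map]
    rfl
end

section
/- Let n be a power of 2 and let b be a power of 2 with 1 < b < n. For each power of 2 i with 2b ≤ i ≤ n, let B_i be a butterfly factor matrix of size i (i.e., B_i ∈ BD(i,n) ∩ DB(i/2,n)). Then the product B_n · B_{n/2} · ⋯ · B_{2b} lies in DB(b,n). -/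
open Matrix

lemma db_one {𝔽 : Type*} [Field 𝔽] (c n : ℕ) : DB c n (1 : Matrix (Fin n) (Fin n) 𝔽) := by
  intro i j h
  apply Matrix.one_apply_ne
  intro e
  exact h (by rw [e])

lemma db_mul {𝔽 : Type*} [Field 𝔽] {c d n : ℕ} (hdc : d ∣ c)
    {P Q : Matrix (Fin n) (Fin n) 𝔽} (hP : DB c n P) (hQ : DB d n Q) :
    DB d n (P * Q) := by
  intro i j h
  rw [Matrix.mul_apply]
  apply Finset.sum_eq_zero
  intro m _
  by_cases hm : (i : ℕ) % c = (m : ℕ) % c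
  · have hmd : (m : ℕ) % d = (i : ℕ) % d := by
      rw [← Nat.mod_mod_of_dvd _ hdc, ← hm, Nat.mod_mod_of_dvd _ hdc]
    rw [hQ m j (by rw [hmd]; exact h), mul_zero]
  · rw [hP i m hm, zero_mul]

/-- for `n = 2^k`, `b = 2^s` with `1 < b < n`, and butterfly factor matrices
`B_i ∈ BD(2^i, n) ∩ DB(2^{i-1}, n)` for `s+1 ≤ i ≤ k`, the product
`B_n · B_{n/2} · ⋯ · B_{2b}` lies in `DB(b,n)`. -/
theorem butterfly_prefix_in_db {𝔽 : Type*} [Field 𝔽] (k s n b : ℕ)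
    (hn : n = 2 ^ k) (hb : b = 2 ^ s) (hs : 1 ≤ s) (hsk : s < k)
    (B : ℕ → Matrix (Fin n) (Fin n) 𝔽)
    (hB : ∀ i, s + 1 ≤ i → i ≤ k → BD (2 ^ i) n (B i) ∧ DB (2 ^ (i - 1)) n (B i)) :
    DB b n (((List.range (k - s)).map fun t => B (k - t)).prod) := by
  have key : ∀ t, t ≤ k - s →
      DB (2 ^ (k - t)) n (((List.range t).map fun t => B (k - t)).prod) := by
    intro t
    induction t with
    | zero => intro _; simpa using db_one (2 ^ k) n
    | succ t ih =>
      intro ht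
      rw [List.range_succ, List.map_append, List.prod_append, List.map_singleton,
        List.prod_singleton]
      have h1 : s + 1 ≤ k - t := by omega
      have h2 : k - t ≤ k := by omega
      have hQ := (hB (k - t) h1 h2).2
      have : k - t - 1 = k - (t + 1) := by omega
      rw [this] at hQ
      exact db_mul (pow_dvd_pow 2 (by omega)) (ih (by omega)) hQ
  have := key (k - s) le_rfl
  rwa [show k - (k - s) = s by omega, ← hb] at this
end

section
/- Let b, q ≥ 1 be integers. Suppose (M̃_{ij})_{1 ≤ i,j ≤ b} are q×q matrices over a field 𝔽 with M̃_{ij} = A_i · D_{ij} · C_j, where each A_i and each C_j is an invertible q×q matrix and each D_{ij} is an invertible diagonal q×q matrix. Define F(i,j) = M̃_{i1}⁻¹ · M̃_{ij} · M̃_{1j}⁻¹ · M̃_{11}. Then for all 1 ≤ i, j ≤ b, C_1 · F(i,j) · C_1⁻¹ = D_{i1}⁻¹ · D_{ij} · D_{1j}⁻¹ · D_{11}; in particular C_1 · F(i,j) · C_1⁻¹ is a diagonal matrix. -/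
open Matrix

lemma isDiag_inv_aux {n R : Type*} [Fintype n] [DecidableEq n] [CommRing R]
    {M : Matrix n n R} (h : M.IsDiag) : M⁻¹.IsDiag := by
  rw [← h.diagonal_diag, Matrix.inv_diagonal]
  exact Matrix.isDiag_diagonal _

lemma isDiag_mul_aux {n R : Type*} [Fintype n] [DecidableEq n] [CommRing R]
    {M N : Matrix n n R} (hM : M.IsDiag) (hN : N.IsDiag) : (M * N).IsDiag := by
  rw [← hM.diagonal_diag, ← hN.diagonal_diag, Matrix.diagonal_mul_diagonal]
  exact Matrix.isDiag_diagonal _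

/-- with `M̃_{ij} = A_i D_{ij} C_j` (all factors invertible, `D_{ij}` diagonal)
and `F(i,j) = M̃_{i1}⁻¹ M̃_{ij} M̃_{1j}⁻¹ M̃_{11}`, we have
`C_1 F(i,j) C_1⁻¹ = D_{i1}⁻¹ D_{ij} D_{1j}⁻¹ D_{11}`, which is diagonal. -/
theorem simultaneous_diag_identity {𝔽 : Type*} [Field 𝔽] (b q : ℕ)
    (hb : 1 ≤ b) (hq : 1 ≤ q)
    (A C : Fin b → Matrix (Fin q) (Fin q) 𝔽)
    (D : Fin b → Fin b → Matrix (Fin q) (Fin q) 𝔽)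
    (hA : ∀ i, IsUnit (A i)) (hC : ∀ j, IsUnit (C j))
    (hD : ∀ i j, IsUnit (D i j) ∧ (D i j).IsDiag)
    (Mt : Fin b → Fin b → Matrix (Fin q) (Fin q) 𝔽)
    (hM : ∀ i j, Mt i j = A i * D i j * C j)
    (F : Fin b → Fin b → Matrix (Fin q) (Fin q) 𝔽)
    (hF : ∀ i j, F i j = (Mt i ⟨0, hb⟩)⁻¹ * Mt i j * (Mt ⟨0, hb⟩ j)⁻¹ * Mt ⟨0, hb⟩ ⟨0, hb⟩) :
    ∀ i j : Fin b,
      C ⟨0, hb⟩ * F i j * (C ⟨0, hb⟩)⁻¹ =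
        (D i ⟨0, hb⟩)⁻¹ * D i j * (D ⟨0, hb⟩ j)⁻¹ * D ⟨0, hb⟩ ⟨0, hb⟩ ∧
      (C ⟨0, hb⟩ * F i j * (C ⟨0, hb⟩)⁻¹).IsDiag := by
  intro i j
  set e : Fin b := ⟨0, hb⟩
  have key : C e * F i j * (C e)⁻¹ =
      (D i e)⁻¹ * D i j * (D e j)⁻¹ * D e e := by
    have hAi := (hA i).nonempty_invertible.some
    have hAe := (hA e).nonempty_invertible.some
    have hCe := (hC e).nonempty_invertible.some
    have hCj := (hC j).nonempty_invertible.some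
    have hDie := ((hD i e).1).nonempty_invertible.some
    have hDej := ((hD e j).1).nonempty_invertible.some
    rw [hF, hM, hM, hM, hM, Matrix.mul_inv_rev, Matrix.mul_inv_rev,
      Matrix.mul_inv_rev, Matrix.mul_inv_rev]
    simp only [Matrix.mul_assoc, Matrix.mul_inv_cancel_left_of_invertible,
      Matrix.inv_mul_cancel_left_of_invertible, Matrix.mul_inv_of_invertible,
      Matrix.mul_one]
  refine ⟨key, ?_⟩
  rw [key]
  exact isDiag_mul_aux (isDiag_mul_aux (isDiag_mul_aux (isDiag_inv_aux (hD i e).2)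
    (hD i j).2) (isDiag_inv_aux (hD e j).2)) (hD e e).2
end
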